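/- arXiv:1203.0280 — 7 statements merged into one kernel-verified Lean document; each statement's English description precedes it below -/
import Mathlib

section
/- Let X be a compact topological space, φ a continuous flow on X, and f : X → ℝ continuous and positive. Let α_f : X × ℝ → ℝ be the function determined by κ_f(x, α_f(x, t)) = t for all x, t, where κ_f(x, t) = ∫₀ᵗ f(φ_s(x)) ds. Define ψ_t(x) = φ_{α_f(x, t)}(x). Then ψ = (ψ_t)_{t∈ℝ} is a flow on X: ψ_0 = id and ψ_{t+s} = ψ_t ∘ ψ_s for all s, t ∈ ℝ. -/
open MeasureTheory intervalIntegral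

/-- Let `φ` be a continuous flow on a compact space `X`, `f : X → ℝ` continuous
and positive, and `α_f` the function determined by `κ_f(x, α_f(x,t)) = t` where
`κ_f(x,t) = ∫₀ᵗ f(φ_s x) ds`. Then `ψ_t(x) = φ_{α_f(x,t)}(x)` is a flow:
`ψ_0 = id` and `ψ_{t+s} = ψ_t ∘ ψ_s`. -/
theorem reparametrization_is_flow
    {X : Type*} [TopologicalSpace X] [CompactSpace X]
    (φ : ℝ → X → X) (hφcont : Continuous fun p : ℝ × X => φ p.1 p.2)
    (hφ0 : φ 0 = id) (hφadd : ∀ t s : ℝ, φ (t + s) = φ t ∘ φ s)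
    (f : X → ℝ) (hf : Continuous f) (hfpos : ∀ x, 0 < f x)
    (α : X → ℝ → ℝ)
    (hα : ∀ (x : X) (t : ℝ), (∫ s in (0:ℝ)..(α x t), f (φ s x)) = t) :
    (fun x : X => φ (α x 0) x) = id ∧
    (∀ t s : ℝ, (fun x : X => φ (α x (t + s)) x) =
      (fun x : X => φ (α x t) x) ∘ (fun x : X => φ (α x s) x)) := by
  -- continuity of the integrand
  have hcont : ∀ x : X, Continuous fun s : ℝ => f (φ s x) := fun x =>
    hf.comp (hφcont.comp (continuous_id.prodMk continuous_const))
  have hint : ∀ (x : X) (a b : ℝ), IntervalIntegrable (fun s => f (φ s x)) volume a b :=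
    fun x a b => ((hcont x).intervalIntegrable a b)
  -- κ is strictly monotone in t
  have hK : ∀ x : X, StrictMono fun t : ℝ => ∫ s in (0:ℝ)..t, f (φ s x) := by
    intro x a b hab
    have h1 : (0:ℝ) < ∫ s in a..b, f (φ s x) :=
      intervalIntegral.intervalIntegral_pos_of_pos (hint x a b) (fun s => hfpos _) hab
    have h2 : (∫ s in (0:ℝ)..a, f (φ s x)) + (∫ s in a..b, f (φ s x))
        = ∫ s in (0:ℝ)..b, f (φ s x) :=
      intervalIntegral.integral_add_adjacent_intervals (hint x 0 a) (hint x a b)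
    dsimp only
    linarith
  have hKinj : ∀ x : X, Function.Injective fun t : ℝ => ∫ s in (0:ℝ)..t, f (φ s x) :=
    fun x => (hK x).injective
  -- α x 0 = 0
  have hα0 : ∀ x : X, α x 0 = 0 := by
    intro x
    apply hKinj x
    simp [hα x 0]
  constructor
  · funext x
    simp [hα0 x, hφ0]
  · intro t s
    funext x
    have key : α x (t + s) = α (φ (α x s) x) t + α x s := by
      apply hKinj x
      dsimp only
      rw [hα x (t + s)]
      set a := α x s with ha
      set T := α (φ a x) t with hT
      have hsub : (∫ u in (0:ℝ)..T, f (φ u (φ a x))) =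
          ∫ v in a..(T + a), f (φ v x) := by
        have : ∀ u : ℝ, f (φ u (φ a x)) = f (φ (u + a) x) := by
          intro u
          rw [hφadd u a]; rfl
        simp_rw [this]
        rw [intervalIntegral.integral_comp_add_right (fun v => f (φ v x)) a]
        norm_num
      have h2 : (∫ v in (0:ℝ)..a, f (φ v x)) + (∫ v in a..(T + a), f (φ v x))
          = ∫ v in (0:ℝ)..(T + a), f (φ v x) :=
        intervalIntegral.integral_add_adjacent_intervals (hint x 0 a) (hint x a (T + a))
      have hs : (∫ v in (0:ℝ)..a, f (φ v x)) = s := hα x s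
      have ht : (∫ u in (0:ℝ)..T, f (φ u (φ a x))) = t := hα (φ a x) t
      rw [← h2, hs, ← hsub, ht, add_comm]
    rw [key, hφadd]
    rfl
end

section
/- Let X be a compact metric space, φ a continuous flow on X, f : X → ℝ continuous and positive, and m a Borel probability measure on X invariant under φ_t for every t ∈ ℝ. Let m^# be the Borel probability measure with density f / (∫_X f dm) with respect to m. Then m^# is invariant under the reparametrized flow ψ^f_t for every t ∈ ℝ. -/
open MeasureTheory intervalIntegral Set
open scoped ENNReal NNReal

section Aux

variable {X : Type*} [MetricSpace X] [CompactSpace X] [MeasurableSpace X] [BorelSpace X]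

private theorem repar_cont_bound [Nonempty X] (h : X → ℝ) (hh : Continuous h) :
    ∃ C, 0 ≤ C ∧ ∀ y, ‖h y‖ ≤ C := by
  obtain ⟨y₀, -, hy₀⟩ := isCompact_univ.exists_isMaxOn univ_nonempty hh.norm.continuousOn
  exact ⟨‖h y₀‖, norm_nonneg _, fun y => hy₀ (mem_univ y)⟩

private theorem repar_kappa_cont (φ : ℝ → X → X)
    (hφcont : Continuous fun p : ℝ × X => φ p.1 p.2)
    (f : X → ℝ) (hf : Continuous f) :
    Continuous fun p : X × ℝ => ∫ u in (0:ℝ)..p.2, f (φ u p.1) := by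
  have h : Continuous (Function.uncurry fun (x : X) (s : ℝ) => f (φ s x)) :=
    hf.comp (hφcont.comp (continuous_snd.prodMk continuous_fst))
  exact continuous_parametric_primitive_of_continuous (μ := volume) h

private theorem repar_kappa_strictMono (φ : ℝ → X → X)
    (hφcont : Continuous fun p : ℝ × X => φ p.1 p.2)
    (f : X → ℝ) (hf : Continuous f) (hfpos : ∀ x, 0 < f x) (x : X) :
    StrictMono fun s : ℝ => ∫ u in (0:ℝ)..s, f (φ u x) := by
  have hfφ : Continuous fun s : ℝ => f (φ s x) :=
    hf.comp (hφcont.comp (continuous_id.prodMk continuous_const))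
  intro a b hab
  have hpos : 0 < ∫ u in a..b, f (φ u x) :=
    intervalIntegral.intervalIntegral_pos_of_pos (hfφ.intervalIntegrable a b)
      (fun u => hfpos _) hab
  have hadd := integral_add_adjacent_intervals (μ := volume)
    (hfφ.intervalIntegrable 0 a) (hfφ.intervalIntegrable a b)
  simp only at hadd ⊢
  linarith

private theorem repar_alpha_kappa (φ : ℝ → X → X)
    (hφcont : Continuous fun p : ℝ × X => φ p.1 p.2)
    (f : X → ℝ) (hf : Continuous f) (hfpos : ∀ x, 0 < f x)
    (α : X → ℝ → ℝ)
    (hα : ∀ (x : X) (t : ℝ), (∫ s in (0:ℝ)..(α x t), f (φ s x)) = t) (x : X) (s : ℝ) :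
    α x (∫ u in (0:ℝ)..s, f (φ u x)) = s :=
  (repar_kappa_strictMono φ hφcont f hf hfpos x).injective
    (hα x (∫ u in (0:ℝ)..s, f (φ u x)))

private theorem repar_alpha_strictMono (φ : ℝ → X → X)
    (hφcont : Continuous fun p : ℝ × X => φ p.1 p.2)
    (f : X → ℝ) (hf : Continuous f) (hfpos : ∀ x, 0 < f x)
    (α : X → ℝ → ℝ)
    (hα : ∀ (x : X) (t : ℝ), (∫ s in (0:ℝ)..(α x t), f (φ s x)) = t) (x : X) :
    StrictMono (α x) := by
  intro a b hab
  have h := (repar_kappa_strictMono φ hφcont f hf hfpos x).lt_iff_lt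
    (a := α x a) (b := α x b)
  simp only [hα] at h
  exact h.mp hab

private theorem repar_alpha_cont (φ : ℝ → X → X)
    (hφcont : Continuous fun p : ℝ × X => φ p.1 p.2)
    (f : X → ℝ) (hf : Continuous f) (hfpos : ∀ x, 0 < f x)
    (α : X → ℝ → ℝ)
    (hα : ∀ (x : X) (t : ℝ), (∫ s in (0:ℝ)..(α x t), f (φ s x)) = t) :
    Continuous fun p : X × ℝ => α p.1 p.2 := by
  have hκmono := repar_kappa_strictMono φ hφcont f hf hfpos
  have hαmono := repar_alpha_strictMono φ hφcont f hf hfpos α hα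
  have hακ := repar_alpha_kappa φ hφcont f hf hfpos α hα
  have huncurry : Continuous (Function.uncurry fun (x : X) (s : ℝ) => f (φ s x)) :=
    hf.comp (hφcont.comp (continuous_snd.prodMk continuous_fst))
  have hKb : ∀ b : ℝ, Continuous fun x : X => ∫ u in (0:ℝ)..b, f (φ u x) := fun b =>
    continuous_parametric_intervalIntegral_of_continuous' (μ := volume) huncurry 0 b
  refine continuous_iff_continuousAt.mpr fun p₀ => ?_
  refine tendsto_order.mpr ⟨fun b hb => ?_, fun b hb => ?_⟩
  · have hopen : IsOpen {p : X × ℝ | (∫ u in (0:ℝ)..b, f (φ u p.1)) < p.2} :=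
      isOpen_lt ((hKb b).comp continuous_fst) continuous_snd
    have hmem : p₀ ∈ {p : X × ℝ | (∫ u in (0:ℝ)..b, f (φ u p.1)) < p.2} := by
      have h := hκmono p₀.1 hb
      simp only [hα p₀.1 p₀.2] at h
      exact h
    filter_upwards [hopen.mem_nhds hmem] with p hp
    have h := hαmono p.1 hp
    rwa [hακ p.1 b] at h
  · have hopen : IsOpen {p : X × ℝ | p.2 < ∫ u in (0:ℝ)..b, f (φ u p.1)} :=
      isOpen_lt continuous_snd ((hKb b).comp continuous_fst)
    have hmem : p₀ ∈ {p : X × ℝ | p.2 < ∫ u in (0:ℝ)..b, f (φ u p.1)} := by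
      have h := hκmono p₀.1 hb
      simp only [hα p₀.1 p₀.2] at h
      exact h
    filter_upwards [hopen.mem_nhds hmem] with p hp
    have h := hαmono p.1 hp
    rwa [hακ p.1 b] at h

end Aux

section Key

variable {X : Type*} [MetricSpace X] [CompactSpace X] [MeasurableSpace X] [BorelSpace X]

set_option maxHeartbeats 1600000 in
private theorem repar_key
    (φ : ℝ → X → X) (hφcont : Continuous fun p : ℝ × X => φ p.1 p.2)
    (hφ0 : φ 0 = id) (hφadd : ∀ t s : ℝ, φ (t + s) = φ t ∘ φ s)
    (f : X → ℝ) (hf : Continuous f) (hfpos : ∀ x, 0 < f x)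
    (m : Measure X) [IsProbabilityMeasure m]
    (hm : ∀ t : ℝ, Measure.map (φ t) m = m)
    (α : X → ℝ → ℝ)
    (hα : ∀ (x : X) (t : ℝ), (∫ s in (0:ℝ)..(α x t), f (φ s x)) = t)
    (g : X → ℝ) (hg : Continuous g) (r : ℝ) :
    ∫ x, f x * g (φ (α x r) x) ∂m = ∫ x, f x * g x ∂m := by
  rcases isEmpty_or_nonempty X with hX | hX
  · have h1 : m univ = 1 := measure_univ
    rw [Set.univ_eq_empty_iff.mpr hX, measure_empty] at h1
    exact absurd h1 (by simp)
  -- notation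
  set κ : X → ℝ → ℝ := fun x s => ∫ u in (0:ℝ)..s, f (φ u x) with hκdef
  have hφc : ∀ s : ℝ, Continuous (φ s) := fun s =>
    hφcont.comp (continuous_const.prodMk continuous_id)
  have hfφ : ∀ x : X, Continuous fun s : ℝ => f (φ s x) := fun x =>
    hf.comp (hφcont.comp (continuous_id.prodMk continuous_const))
  have hfi : ∀ (x : X) (a b : ℝ), IntervalIntegrable (fun u => f (φ u x)) volume a b :=
    fun x a b => (hfφ x).intervalIntegrable a b
  have hκcont : Continuous fun p : X × ℝ => κ p.1 p.2 := repar_kappa_cont φ hφcont f hf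
  have hκmono : ∀ x, StrictMono (κ x) := repar_kappa_strictMono φ hφcont f hf hfpos
  have hκα : ∀ x t, κ x (α x t) = t := hα
  have hακ : ∀ x s, α x (κ x s) = s := repar_alpha_kappa φ hφcont f hf hfpos α hα
  have hαcont : Continuous fun p : X × ℝ => α p.1 p.2 :=
    repar_alpha_cont φ hφcont f hf hfpos α hα
  have hκ0 : ∀ x, κ x 0 = 0 := fun x => integral_same
  have hα0 : ∀ x, α x 0 = 0 := fun x => by
    have h := hακ x 0; rwa [hκ0 x] at h
  have hφadd' : ∀ (u s : ℝ) (x : X), φ (u + s) x = φ u (φ s x) := fun u s x => by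
    rw [hφadd]; rfl
  have hκs : ∀ (x : X) (s s' : ℝ), κ x s' - κ x s = ∫ u in s..s', f (φ u x) := by
    intro x s s'
    have h := integral_add_adjacent_intervals (hfi x 0 s) (hfi x s s')
    simp only [hκdef]
    linarith
  have hκcoc : ∀ (x : X) (s rr : ℝ), κ x (s + rr) = κ x s + κ (φ s x) rr := by
    intro x s rr
    have h1 : κ (φ s x) rr = ∫ u in s..(rr + s), f (φ u x) := by
      have heq : (fun u => f (φ u (φ s x))) = fun u => f (φ (u + s) x) := by
        funext u; rw [hφadd' u s x]
      have h2 := integral_comp_add_right (a := (0:ℝ)) (b := rr) (fun u => f (φ u x)) s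
      simp only [hκdef, heq, zero_add] at h2 ⊢
      exact h2
    have h2 := hκs x s (s + rr)
    rw [add_comm rr s] at h1
    linarith
  have hαcoc : ∀ (x : X) (s t' : ℝ), s + α (φ s x) t' = α x (κ x s + t') := by
    intro x s t'
    apply (hκmono x).injective
    rw [hκcoc x s (α (φ s x) t'), hκα, hκα]
  -- continuity of reparametrized maps
  have hψu : ∀ x : X, Continuous fun u : ℝ => g (φ (α x u) x) := fun x =>
    hg.comp (hφcont.comp ((hαcont.comp (continuous_const.prodMk continuous_id)).prodMk
      continuous_const))
  -- substitution identity
  have hsub : ∀ (rr T : ℝ) (x : X),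
      (∫ s in (0:ℝ)..T, f (φ s x) * g (φ (α x (κ x s + rr)) x)) =
      ∫ u in rr..(κ x T + rr), g (φ (α x u) x) := by
    intro rr T x
    have hσ : ∀ s ∈ uIcc (0:ℝ) T, HasDerivAt (fun s' => κ x s' + rr) (f (φ s x)) s := by
      intro s _
      have h1 : HasDerivAt (κ x) (f (φ s x)) s :=
        intervalIntegral.integral_hasDerivAt_right (hfi x 0 s)
          ((hfφ x).stronglyMeasurableAtFilter volume (nhds s)) (hfφ x).continuousAt
      exact h1.add_const rr
    have h := integral_comp_smul_deriv hσ ((hfφ x).continuousOn)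
      (show Continuous fun u => g (φ (α x u) x) from hψu x)
    simp only [Function.comp, smul_eq_mul, hκ0 x, zero_add] at h
    exact h
  -- bound for g
  obtain ⟨Cg, hCg0, hCg⟩ := repar_cont_bound g hg
  -- the function H and its properties
  have hmain : ∀ rr T : ℝ, 0 < T →
      (∫ x, (∫ u in rr..(κ x T + rr), g (φ (α x u) x)) ∂m)
        = T * ∫ x, f x * g (φ (α x rr) x) ∂m
      ∧ Integrable (fun x => ∫ u in rr..(κ x T + rr), g (φ (α x u) x)) m := by
    intro rr T hT
    set H : X → ℝ := fun y => f y * g (φ (α y rr) y) with hHdef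
    have hψr : Continuous fun y : X => φ (α y rr) y :=
      hφcont.comp ((hαcont.comp (continuous_id.prodMk continuous_const)).prodMk continuous_id)
    have hHcont : Continuous H := hf.mul (hg.comp hψr)
    obtain ⟨CH, hCH0, hCH⟩ := repar_cont_bound H hHcont
    have hΦH : ∀ (x : X) (s : ℝ), f (φ s x) * g (φ (α x (κ x s + rr)) x) = H (φ s x) := by
      intro x s
      have h1 : α x (κ x s + rr) = s + α (φ s x) rr := (hαcoc x s rr).symm
      have h2 : φ (s + α (φ s x) rr) x = φ (α (φ s x) rr) (φ s x) := by
        rw [add_comm, hφadd' (α (φ s x) rr) s x]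
      rw [h1, h2, hHdef]
    set ν : Measure ℝ := volume.restrict (Ioc (0:ℝ) T) with hνdef
    haveI hνfin : IsFiniteMeasure ν := by
      constructor
      rw [hνdef, Measure.restrict_apply_univ]
      exact measure_Ioc_lt_top
    have hprod : Integrable (fun q : X × ℝ => H (φ q.2 q.1)) (m.prod ν) := by
      refine ⟨(hHcont.comp (hφcont.comp (continuous_snd.prodMk
        continuous_fst))).aestronglyMeasurable, ?_⟩
      exact HasFiniteIntegral.of_bounded (C := CH) (ae_of_all _ fun q => hCH _)
    have hswap := integral_integral_swap (f := fun (x : X) (s : ℝ) => H (φ s x))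
      (μ := m) (ν := ν) hprod
    have hinner : ∀ s : ℝ, (∫ x, H (φ s x) ∂m) = ∫ y, H y ∂m := by
      intro s
      conv_rhs => rw [← hm s]
      exact (integral_map (hφc s).aemeasurable hHcont.aestronglyMeasurable).symm
    have hA : ∀ x : X, (∫ s, H (φ s x) ∂ν)
        = ∫ u in rr..(κ x T + rr), g (φ (α x u) x) := by
      intro x
      rw [← hsub rr T x]
      rw [intervalIntegral.integral_of_le hT.le]
      simp only [hΦH]
      rfl
    constructor
    · calc (∫ x, (∫ u in rr..(κ x T + rr), g (φ (α x u) x)) ∂m)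
          = ∫ x, (∫ s, H (φ s x) ∂ν) ∂m := by
            congr 1; funext x; rw [hA x]
        _ = ∫ s, (∫ x, H (φ s x) ∂m) ∂ν := hswap
        _ = ∫ s, (∫ y, H y ∂m) ∂ν := by
            congr 1; funext s; rw [hinner s]
        _ = T * ∫ y, H y ∂m := by
            rw [MeasureTheory.integral_const]
            rw [hνdef, measureReal_def, Measure.restrict_apply_univ, Real.volume_Ioc, smul_eq_mul]
            rw [ENNReal.toReal_ofReal (by linarith)]
            ring_nf
    · have hint := hprod.integral_prod_left
      refine hint.congr (ae_of_all _ fun x => ?_)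
      exact hA x
  -- conclude via T → ∞
  have hGi : ∀ (x : X) (a b : ℝ), IntervalIntegrable (fun u => g (φ (α x u) x)) volume a b :=
    fun x a b => (hψu x).intervalIntegrable a b
  have hbound : ∀ T : ℝ, 0 < T →
      T * |(∫ x, f x * g (φ (α x r) x) ∂m) - (∫ x, f x * g (φ (α x 0) x) ∂m)|
        ≤ 2 * Cg * |r| := by
    intro T hT
    obtain ⟨hEqr, hIntr⟩ := hmain r T hT
    obtain ⟨hEq0, hInt0⟩ := hmain 0 T hT
    have hb : ∀ x : X,
        ‖(∫ u in r..(κ x T + r), g (φ (α x u) x))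
          - (∫ u in (0:ℝ)..(κ x T + 0), g (φ (α x u) x))‖ ≤ 2 * Cg * |r| := by
      intro x
      have e1 := integral_add_adjacent_intervals (hGi x r (κ x T)) (hGi x (κ x T) (κ x T + r))
      have e2 := integral_add_adjacent_intervals (hGi x 0 r) (hGi x r (κ x T))
      have b1 : ‖∫ u in (κ x T)..(κ x T + r), g (φ (α x u) x)‖ ≤ Cg * |r| := by
        have h := intervalIntegral.norm_integral_le_of_norm_le_const
          (C := Cg) (f := fun u => g (φ (α x u) x)) (a := κ x T) (b := κ x T + r)
          (fun u _ => hCg _)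
        simpa using h
      have b2 : ‖∫ u in (0:ℝ)..r, g (φ (α x u) x)‖ ≤ Cg * |r| := by
        have h := intervalIntegral.norm_integral_le_of_norm_le_const
          (C := Cg) (f := fun u => g (φ (α x u) x)) (a := (0:ℝ)) (b := r)
          (fun u _ => hCg _)
        simpa using h
      have hdiff : (∫ u in r..(κ x T + r), g (φ (α x u) x))
          - (∫ u in (0:ℝ)..(κ x T + 0), g (φ (α x u) x))
          = (∫ u in (κ x T)..(κ x T + r), g (φ (α x u) x))
            - ∫ u in (0:ℝ)..r, g (φ (α x u) x) := by
        rw [add_zero]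
        linarith
      rw [hdiff]
      calc ‖(∫ u in (κ x T)..(κ x T + r), g (φ (α x u) x))
              - ∫ u in (0:ℝ)..r, g (φ (α x u) x)‖
          ≤ ‖∫ u in (κ x T)..(κ x T + r), g (φ (α x u) x)‖
            + ‖∫ u in (0:ℝ)..r, g (φ (α x u) x)‖ := norm_sub_le _ _
        _ ≤ Cg * |r| + Cg * |r| := add_le_add b1 b2
        _ = 2 * Cg * |r| := by ring
    have hnorm : ‖(T * ∫ x, f x * g (φ (α x r) x) ∂m)
        - T * ∫ x, f x * g (φ (α x 0) x) ∂m‖ ≤ 2 * Cg * |r| := by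
      rw [← hEqr, ← hEq0, ← integral_sub hIntr hInt0]
      have h := norm_integral_le_of_norm_le_const (μ := m) (C := 2 * Cg * |r|)
        (ae_of_all _ fun x => hb x)
      simpa [measure_univ] using h
    calc T * |(∫ x, f x * g (φ (α x r) x) ∂m) - (∫ x, f x * g (φ (α x 0) x) ∂m)|
        = |(T * ∫ x, f x * g (φ (α x r) x) ∂m) - T * ∫ x, f x * g (φ (α x 0) x) ∂m| := by
          rw [← mul_sub, abs_mul, abs_of_pos hT]
      _ ≤ 2 * Cg * |r| := hnorm
  have hzero : (∫ x, f x * g (φ (α x r) x) ∂m) = ∫ x, f x * g (φ (α x 0) x) ∂m := by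
    by_contra h
    have hd : 0 < |(∫ x, f x * g (φ (α x r) x) ∂m) - (∫ x, f x * g (φ (α x 0) x) ∂m)| := by
      rw [abs_pos, sub_ne_zero]; exact h
    have hT : 0 < (2 * Cg * |r| + 1) / |(∫ x, f x * g (φ (α x r) x) ∂m)
        - (∫ x, f x * g (φ (α x 0) x) ∂m)| := by
      apply div_pos _ hd
      have : 0 ≤ 2 * Cg * |r| := by positivity
      linarith
    have hb := hbound _ hT
    rw [div_mul_cancel₀ _ (ne_of_gt hd)] at hb
    linarith
  rw [hzero]
  congr 1
  funext x
  rw [hα0 x, hφ0]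
  rfl

end Key

/-- Let `φ` be a continuous flow on a compact metric space `X`, `f : X → ℝ`
continuous positive, and `m` a `φ`-invariant Borel probability measure. Then the
probability measure `m^#` with density `f / ∫ f dm` with respect to `m` is
invariant under the reparametrized flow `ψ^f_t(x) = φ_{α_f(x,t)}(x)`. -/
theorem reparametrized_flow_invariant_measure
    {X : Type*} [MetricSpace X] [CompactSpace X] [MeasurableSpace X] [BorelSpace X]
    (φ : ℝ → X → X) (hφcont : Continuous fun p : ℝ × X => φ p.1 p.2)
    (hφ0 : φ 0 = id) (hφadd : ∀ t s : ℝ, φ (t + s) = φ t ∘ φ s)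
    (f : X → ℝ) (hf : Continuous f) (hfpos : ∀ x, 0 < f x)
    (m : Measure X) [IsProbabilityMeasure m]
    (hm : ∀ t : ℝ, Measure.map (φ t) m = m)
    (α : X → ℝ → ℝ)
    (hα : ∀ (x : X) (t : ℝ), (∫ s in (0:ℝ)..(α x t), f (φ s x)) = t) :
    ∀ t : ℝ,
      Measure.map (fun x : X => φ (α x t) x)
        (m.withDensity fun x => ENNReal.ofReal (f x / ∫ y, f y ∂m)) =
      m.withDensity fun x => ENNReal.ofReal (f x / ∫ y, f y ∂m) := by
  intro t
  rcases isEmpty_or_nonempty X with hX | hX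
  · have h1 : m univ = 1 := measure_univ
    rw [Set.univ_eq_empty_iff.mpr hX, measure_empty] at h1
    exact absurd h1 (by simp)
  set c := ∫ y, f y ∂m with hc
  have hαcont : Continuous fun p : X × ℝ => α p.1 p.2 :=
    repar_alpha_cont φ hφcont f hf hfpos α hα
  have hψc : Continuous fun x : X => φ (α x t) x :=
    hφcont.comp ((hαcont.comp (continuous_id.prodMk continuous_const)).prodMk continuous_id)
  have hψm : Measurable fun x : X => φ (α x t) x := hψc.measurable
  have hmeas : Measurable fun x => ENNReal.ofReal (f x) := hf.measurable.ennreal_ofReal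
  have hfd : (fun x => ENNReal.ofReal (f x / c))
      = ENNReal.ofReal c⁻¹ • fun x => ENNReal.ofReal (f x) := by
    funext x
    rw [Pi.smul_apply, smul_eq_mul, div_eq_mul_inv, ENNReal.ofReal_mul (hfpos x).le, mul_comm]
  rw [hfd, withDensity_smul _ hmeas, Measure.map_smul]
  congr 1
  -- now show invariance of m.withDensity (ofReal ∘ f)
  obtain ⟨Cf, hCf0, hCf⟩ := repar_cont_bound f hf
  haveI hfin : IsFiniteMeasure (m.withDensity fun x => ENNReal.ofReal (f x)) :=
    isFiniteMeasure_withDensity_ofReal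
      (HasFiniteIntegral.of_bounded (C := Cf) (ae_of_all _ fun x => hCf x))
  apply ext_of_forall_lintegral_eq_of_IsFiniteMeasure
  intro gb
  have hgbm : Measurable fun x : X => (gb x : ℝ≥0∞) :=
    measurable_coe_nnreal_ennreal.comp gb.continuous.measurable
  rw [lintegral_map hgbm hψm]
  rw [lintegral_withDensity_eq_lintegral_mul _ hmeas
      (show Measurable fun x : X => (gb (φ (α x t) x) : ℝ≥0∞) from hgbm.comp hψm),
    lintegral_withDensity_eq_lintegral_mul _ hmeas hgbm]
  have hcoe : ∀ y : X, (gb y : ℝ≥0∞) = ENNReal.ofReal ((gb y : ℝ)) :=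
    fun y => (ENNReal.ofReal_coe_nnreal).symm
  have h1 : ((fun x => ENNReal.ofReal (f x)) * fun x => (gb (φ (α x t) x) : ℝ≥0∞))
      = fun x => ENNReal.ofReal (f x * (gb (φ (α x t) x) : ℝ)) := by
    funext x
    rw [Pi.mul_apply, hcoe, ← ENNReal.ofReal_mul (hfpos x).le]
  have h2 : ((fun x => ENNReal.ofReal (f x)) * fun x => (gb x : ℝ≥0∞))
      = fun x => ENNReal.ofReal (f x * (gb x : ℝ)) := by
    funext x
    rw [Pi.mul_apply, hcoe, ← ENNReal.ofReal_mul (hfpos x).le]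
  rw [h1, h2]
  have hgR : Continuous fun y : X => ((gb y : ℝ)) :=
    NNReal.continuous_coe.comp gb.continuous
  have hint1 : Integrable (fun x => f x * (gb (φ (α x t) x) : ℝ)) m := by
    have hcont : Continuous fun x => f x * (gb (φ (α x t) x) : ℝ) :=
      hf.mul (hgR.comp hψc)
    obtain ⟨C, hC0, hC⟩ := repar_cont_bound _ hcont
    exact ⟨hcont.aestronglyMeasurable, HasFiniteIntegral.of_bounded (C := C) (ae_of_all _ hC)⟩
  have hint2 : Integrable (fun x => f x * (gb x : ℝ)) m := by
    have hcont : Continuous fun x => f x * (gb x : ℝ) := hf.mul hgR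
    obtain ⟨C, hC0, hC⟩ := repar_cont_bound _ hcont
    exact ⟨hcont.aestronglyMeasurable, HasFiniteIntegral.of_bounded (C := C) (ae_of_all _ hC)⟩
  rw [← ofReal_integral_eq_lintegral_ofReal hint1
    (ae_of_all _ fun x => mul_nonneg (hfpos x).le (gb (φ (α x t) x)).coe_nonneg)]
  rw [← ofReal_integral_eq_lintegral_ofReal hint2
    (ae_of_all _ fun x => mul_nonneg (hfpos x).le (gb x).coe_nonneg)]
  congr 1
  exact repar_key φ hφcont hφ0 hφadd f hf hfpos m hm α hα _ hgR t
end

section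
/- Let X be a compact metric space, φ a continuous flow on X, and f, g : X → ℝ continuous positive functions that are Livšic-cohomologous, i.e. there exists a continuous U : X → ℝ with ∫₀ᵗ f(φ_s(x)) ds − ∫₀ᵗ g(φ_s(x)) ds = U(φ_t(x)) − U(x) for all x ∈ X and t ∈ ℝ. Then the reparametrized flows ψ^f and ψ^g are conjugated: there exists a homeomorphism h : X → X such that h(ψ^f_t(x)) = ψ^g_t(h(x)) for all x ∈ X and t ∈ ℝ. -/
set_option maxHeartbeats 1000000

open MeasureTheory intervalIntegral

noncomputable def flowKappa {X : Type*} (φ : ℝ → X → X) (g : X → ℝ) (x : X) (t : ℝ) : ℝ :=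
  ∫ s in (0:ℝ)..t, g (φ s x)

lemma orbitCont {X : Type*} [TopologicalSpace X] {φ : ℝ → X → X}
    (hφcont : Continuous fun p : ℝ × X => φ p.1 p.2)
    {g : X → ℝ} (hg : Continuous g) (x : X) : Continuous fun s : ℝ => g (φ s x) :=
  hg.comp (hφcont.comp (continuous_id.prodMk continuous_const))

lemma kappa_strictMono {X : Type*} [TopologicalSpace X] {φ : ℝ → X → X}
    (hφcont : Continuous fun p : ℝ × X => φ p.1 p.2)
    {g : X → ℝ} (hg : Continuous g) (hgpos : ∀ x, 0 < g x) (x : X) :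
    StrictMono (flowKappa φ g x) := by
  intro a b hab
  have hG := orbitCont hφcont hg x
  have key := integral_add_adjacent_intervals (hG.intervalIntegrable (μ := volume) 0 a)
    (hG.intervalIntegrable (μ := volume) a b)
  have hpos : 0 < ∫ s in a..b, g (φ s x) :=
    intervalIntegral_pos_of_pos (hG.intervalIntegrable a b) (fun u => hgpos _) hab
  have h2 : flowKappa φ g x a + ∫ s in a..b, g (φ s x) = flowKappa φ g x b := key
  show flowKappa φ g x a < flowKappa φ g x b
  linarith

lemma kappa_zero {X : Type*} (φ : ℝ → X → X) (g : X → ℝ) (x : X) :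
    flowKappa φ g x 0 = 0 := by
  simp [flowKappa]

lemma kappa_add {X : Type*} [TopologicalSpace X] {φ : ℝ → X → X}
    (hφcont : Continuous fun p : ℝ × X => φ p.1 p.2)
    {g : X → ℝ} (hg : Continuous g)
    (hφadd : ∀ t s : ℝ, φ (t + s) = φ t ∘ φ s) (x : X) (s r : ℝ) :
    flowKappa φ g x (s + r) = flowKappa φ g x s + flowKappa φ g (φ s x) r := by
  have hG := orbitCont hφcont hg x
  have h1 : flowKappa φ g (φ s x) r = ∫ u in s..(s + r), g (φ u x) := by
    have he : ∀ u : ℝ, g (φ u (φ s x)) = g (φ (u + s) x) := by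
      intro u; rw [hφadd u s]; rfl
    unfold flowKappa
    simp_rw [he]
    rw [integral_comp_add_right (fun v => g (φ v x)) s, zero_add, add_comm r s]
  rw [h1]
  show flowKappa φ g x (s + r) = (∫ u in (0:ℝ)..s, g (φ u x)) + ∫ u in s..(s + r), g (φ u x)
  rw [integral_add_adjacent_intervals (hG.intervalIntegrable (μ := volume) 0 s)
    (hG.intervalIntegrable (μ := volume) s (s + r))]
  rfl

lemma kappa_cont {X : Type*} [TopologicalSpace X] {φ : ℝ → X → X}
    (hφcont : Continuous fun p : ℝ × X => φ p.1 p.2)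
    {g : X → ℝ} (hg : Continuous g) :
    Continuous fun p : X × ℝ => flowKappa φ g p.1 p.2 := by
  have h : Continuous (Function.uncurry fun (p : X × ℝ) (t : ℝ) => g (φ t p.1)) := by
    exact hg.comp (hφcont.comp ((continuous_snd).prodMk (continuous_fst.comp continuous_fst)))
  exact continuous_parametric_intervalIntegral_of_continuous h continuous_snd

lemma kappa_tendsto {X : Type*} [TopologicalSpace X] {φ : ℝ → X → X}
    (hφcont : Continuous fun p : ℝ × X => φ p.1 p.2)
    {g : X → ℝ} (hg : Continuous g)
    (xs : ℕ → X) (as : ℕ → ℝ) (x₁ : X) (a : ℝ)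
    (hxs : Filter.Tendsto xs Filter.atTop (nhds x₁))
    (has : Filter.Tendsto as Filter.atTop (nhds a)) :
    Filter.Tendsto (fun n => flowKappa φ g (xs n) (as n)) Filter.atTop
      (nhds (flowKappa φ g x₁ a)) :=
  by
  have h1 := (kappa_cont hφcont hg).tendsto (x₁, a)
  have h2 := hxs.prodMk_nhds has
  have h3 := h1.comp h2
  exact h3

lemma cont_inv {X : Type*} [MetricSpace X] [CompactSpace X] {φ : ℝ → X → X}
    (hφcont : Continuous fun p : ℝ × X => φ p.1 p.2)
    {g : X → ℝ} (hg : Continuous g) (hgpos : ∀ x, 0 < g x)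
    {c A : X → ℝ} (hc : Continuous c)
    (hA : ∀ x, flowKappa φ g x (A x) = c x) : Continuous A := by
  cases isEmpty_or_nonempty X with
  | inl h => exact continuous_iff_continuousAt.mpr fun x => (IsEmpty.false x).elim
  | inr h =>
    obtain ⟨x₀, -, hx₀⟩ := isCompact_univ.exists_isMinOn Set.univ_nonempty hg.continuousOn
    obtain ⟨m, hm0, hm⟩ : ∃ m : ℝ, 0 < m ∧ ∀ y, m ≤ g y :=
      ⟨g x₀, hgpos x₀, fun y => isMinOn_iff.mp hx₀ y (Set.mem_univ y)⟩
    obtain ⟨z₀, -, hz₀⟩ := isCompact_univ.exists_isMaxOn Set.univ_nonempty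
      (hc.abs.continuousOn)
    obtain ⟨M, hM⟩ : ∃ M : ℝ, ∀ y, |c y| ≤ M :=
      ⟨|c z₀|, fun y => isMaxOn_iff.mp hz₀ y (Set.mem_univ y)⟩
    have hM0 : 0 ≤ M := le_trans (abs_nonneg _) (hM z₀)
    obtain ⟨C, hC0, hmC⟩ : ∃ C : ℝ, 0 ≤ C ∧ m * C = M :=
      ⟨M / m, div_nonneg hM0 hm0.le, by field_simp⟩
    have hup : ∀ (x : X) (t : ℝ), 0 ≤ t → m * t ≤ flowKappa φ g x t := by
      intro x t ht
      have h1 : (∫ _ in (0:ℝ)..t, m) ≤ flowKappa φ g x t := by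
        apply integral_mono_on ht (intervalIntegrable_const)
          ((orbitCont hφcont hg x).intervalIntegrable 0 t)
        intro u _; exact hm _
      rwa [intervalIntegral.integral_const, smul_eq_mul, sub_zero, mul_comm] at h1
    have hdown : ∀ (x : X) (t : ℝ), t ≤ 0 → flowKappa φ g x t ≤ m * t := by
      intro x t ht
      have h1 : (∫ _ in t..(0:ℝ), m) ≤ ∫ s in t..(0:ℝ), g (φ s x) := by
        apply integral_mono_on ht (intervalIntegrable_const)
          ((orbitCont hφcont hg x).intervalIntegrable t 0)
        intro u _; exact hm _
      rw [intervalIntegral.integral_const, smul_eq_mul, zero_sub] at h1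
      have h2 : flowKappa φ g x t = -∫ s in t..(0:ℝ), g (φ s x) := by
        rw [flowKappa, integral_symm]
      rw [h2]; linarith
    have hAb : ∀ x, A x ∈ Set.Icc (-C) C := by
      intro x
      constructor
      · have h1 : flowKappa φ g x (-C) ≤ flowKappa φ g x (A x) := by
          rw [hA]
          have h3 := hdown x (-C) (by linarith)
          have h2 : -M ≤ c x := neg_le_of_abs_le (hM x)
          rw [mul_neg, hmC] at h3
          linarith
        exact ((kappa_strictMono hφcont hg hgpos x).le_iff_le).mp h1
      · have h1 : flowKappa φ g x (A x) ≤ flowKappa φ g x C := by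
          rw [hA]
          have h3 := hup x C hC0
          have h2 : c x ≤ M := le_of_abs_le (hM x)
          rw [hmC] at h3
          linarith
        exact ((kappa_strictMono hφcont hg hgpos x).le_iff_le).mp h1
    rw [continuous_iff_continuousAt]
    intro x₁
    apply Filter.tendsto_of_subseq_tendsto
    intro ns hns
    obtain ⟨a, ha_mem, ms, hms, hconv⟩ :=
      tendsto_subseq_of_bounded (Metric.isBounded_Icc (-C) C)
        (x := fun n => A (ns n)) (fun n => hAb (ns n))
    refine ⟨ms, ?_⟩
    have hnms : Filter.Tendsto (fun n => ns (ms n)) Filter.atTop (nhds x₁) :=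
      hns.comp hms.tendsto_atTop
    have h1 : Filter.Tendsto (fun n => flowKappa φ g (ns (ms n)) (A (ns (ms n))))
        Filter.atTop (nhds (flowKappa φ g x₁ a)) :=
      kappa_tendsto hφcont hg _ _ x₁ a hnms hconv
    have h2 : Filter.Tendsto (fun n => c (ns (ms n))) Filter.atTop (nhds (c x₁)) :=
      (hc.tendsto x₁).comp hnms
    have h3 : (fun n => flowKappa φ g (ns (ms n)) (A (ns (ms n)))) =
        fun n => c (ns (ms n)) := funext fun n => hA _
    rw [h3] at h1
    have h4 : flowKappa φ g x₁ a = c x₁ := tendsto_nhds_unique h1 h2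
    have h5 : a = A x₁ :=
      (kappa_strictMono hφcont hg hgpos x₁).injective (by rw [h4, hA])
    rwa [h5] at hconv

/-- If two continuous positive functions `f, g` on a compact metric space with a
continuous flow `φ` are Livšic-cohomologous, i.e. `κ_f(x,t) − κ_g(x,t) =
U(φ_t x) − U(x)` for a continuous `U`, then the reparametrized flows `ψ^f` and
`ψ^g` are conjugated by a homeomorphism `h`: `h(ψ^f_t x) = ψ^g_t (h x)`. -/
theorem livsic_cohomologous_reparametrizations_conjugated
    {X : Type*} [MetricSpace X] [CompactSpace X]
    (φ : ℝ → X → X) (hφcont : Continuous fun p : ℝ × X => φ p.1 p.2)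
    (hφ0 : φ 0 = id) (hφadd : ∀ t s : ℝ, φ (t + s) = φ t ∘ φ s)
    (f g : X → ℝ) (hf : Continuous f) (hg : Continuous g)
    (hfpos : ∀ x, 0 < f x) (hgpos : ∀ x, 0 < g x)
    (U : X → ℝ) (hU : Continuous U)
    (hcoh : ∀ (x : X) (t : ℝ),
      (∫ s in (0:ℝ)..t, f (φ s x)) - (∫ s in (0:ℝ)..t, g (φ s x)) = U (φ t x) - U x)
    (αf αg : X → ℝ → ℝ)
    (hαf : ∀ (x : X) (t : ℝ), (∫ s in (0:ℝ)..(αf x t), f (φ s x)) = t)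
    (hαg : ∀ (x : X) (t : ℝ), (∫ s in (0:ℝ)..(αg x t), g (φ s x)) = t) :
    ∃ h : X ≃ₜ X, ∀ (x : X) (t : ℝ),
      h (φ (αf x t) x) = φ (αg (h x) t) (h x) := by
  -- reformulate in terms of `flowKappa`
  have hκf : ∀ (x : X) (t : ℝ), flowKappa φ f x (αf x t) = t := hαf
  have hκg : ∀ (x : X) (t : ℝ), flowKappa φ g x (αg x t) = t := hαg
  have hcoh' : ∀ (x : X) (t : ℝ),
      flowKappa φ f x t - flowKappa φ g x t = U (φ t x) - U x := hcoh
  have hfadd := kappa_add hφcont hf hφadd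
  have hgadd := kappa_add hφcont hg hφadd
  have hfmono := kappa_strictMono hφcont hf hfpos
  have hgmono := kappa_strictMono hφcont hg hgpos
  -- the conjugating map and its inverse
  set H : X → X := fun x => φ (αg x (U x)) x with hH_def
  set K : X → X := fun x => φ (αf x (-U x)) x with hK_def
  have hcomp : ∀ (s r : ℝ) (x : X), φ r (φ s x) = φ (s + r) x := by
    intro s r x
    rw [add_comm s r, hφadd r s]; rfl
  have hid : ∀ x : X, φ 0 x = x := fun x => by rw [hφ0]; rfl
  -- K ∘ H = id
  have hKH : ∀ x, K (H x) = x := by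
    intro x
    show φ (αf (φ (αg x (U x)) x) (-U (φ (αg x (U x)) x))) (φ (αg x (U x)) x) = x
    set b := αg x (U x) with hb_def
    set τ := αf (φ b x) (-U (φ b x)) with hτ_def
    rw [hcomp b τ x]
    have h1 : flowKappa φ f x (b + τ) = flowKappa φ f x b - U (φ b x) := by
      rw [hfadd x b τ, hκf]; ring
    have h2 : flowKappa φ f x b = U (φ b x) := by
      have h3 := hcoh' x b
      rw [hκg x (U x)] at h3  -- flowKappa φ g x b = U x? need care
      linarith
    have h4 : flowKappa φ f x (b + τ) = flowKappa φ f x 0 := by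
      rw [kappa_zero, h1, h2]; ring
    have h5 : b + τ = 0 := (hfmono x).injective h4
    rw [h5, hid]
  -- H ∘ K = id
  have hHK : ∀ x, H (K x) = x := by
    intro x
    show φ (αg (φ (αf x (-U x)) x) (U (φ (αf x (-U x)) x))) (φ (αf x (-U x)) x) = x
    set τ := αf x (-U x) with hτ_def
    set b := αg (φ τ x) (U (φ τ x)) with hb_def
    rw [hcomp τ b x]
    have h1 : flowKappa φ g x (τ + b) = flowKappa φ g x τ + U (φ τ x) := by
      rw [hgadd x τ b, hκg]
    have h2 : flowKappa φ g x τ = -U (φ τ x) := by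
      have h3 := hcoh' x τ
      rw [hκf x (-U x)] at h3
      linarith
    have h4 : flowKappa φ g x (τ + b) = flowKappa φ g x 0 := by
      rw [kappa_zero, h1, h2]; ring
    have h5 : τ + b = 0 := (hgmono x).injective h4
    rw [h5, hid]
  -- continuity of H
  have hHcont : Continuous H := by
    have hA : Continuous fun x => αg x (U x) := by
      apply cont_inv hφcont hg hgpos hU
      intro x; exact hκg x (U x)
    exact hφcont.comp (hA.prodMk continuous_id)
  -- assemble the homeomorphism
  let e : X ≃ X := ⟨H, K, hKH, hHK⟩
  have hHcont' : Continuous e := hHcont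
  refine ⟨Continuous.homeoOfEquivCompactToT2 (f := e) hHcont', ?_⟩
  intro x t
  show H (φ (αf x t) x) = φ (αg (H x) t) (H x)
  show φ (αg (φ (αf x t) x) (U (φ (αf x t) x))) (φ (αf x t) x) =
    φ (αg (φ (αg x (U x)) x) t) (φ (αg x (U x)) x)
  set a := αf x t with ha_def
  set d := αg (φ a x) (U (φ a x)) with hd_def
  set b := αg x (U x) with hb_def
  set c := αg (φ b x) t with hc_def
  rw [hcomp a d x, hcomp b c x]
  have h1 : flowKappa φ g x (a + d) = t + U x := by
    rw [hgadd x a d, hκg]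
    have h2 := hcoh' x a
    rw [hκf x t] at h2
    linarith
  have h3 : flowKappa φ g x (b + c) = t + U x := by
    rw [hgadd x b c, hκg, hκg]; ring
  have h4 : a + d = b + c := (hgmono x).injective (by rw [h1, h3])
  rw [h4]
end

section
/- Let X be a set, φ a flow on X, V a finite-dimensional real normed vector space, and κ : X × ℝ → V a map satisfying κ(x, t + s) = κ(φ_s(x), t) + κ(x, s) for all x, s, t, such that t ↦ κ(x, t) is continuous for each x. Fix C > 0 and define κ^C(x, t) = (1/C) ∫₀^C κ(φ_s(x), t) ds. Then: (i) κ^C(x, t) = (1/C)(∫_t^{t+C} κ(x, r) dr − ∫₀^C κ(x, r) dr); (ii) κ^C satisfies the same translation-cocycle identity κ^C(x, t + s) = κ^C(φ_s(x), t) + κ^C(x, s); (iii) for each x the map t ↦ κ^C(x, t) is differentiable with derivative (κ(x, t + C) − κ(x, t))/C; (iv) if φ_p(x) = x then κ^C(x, p) = κ(x, p), so κ^C has the same periods as κ. -/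
open MeasureTheory intervalIntegral

/-- Given a translation cocycle `κ` over a flow `φ`, continuous in `t`, and `C > 0`,
the average `κ^C(x,t) = (1/C) ∫₀^C κ(φ_s x, t) ds` satisfies:
(i) `κ^C(x,t) = (1/C)(∫_t^{t+C} κ(x,r) dr − ∫₀^C κ(x,r) dr)`;
(ii) the translation-cocycle identity;
(iii) `t ↦ κ^C(x,t)` is differentiable with derivative `(κ(x,t+C) − κ(x,t))/C`;
(iv) `κ^C` has the same periods as `κ`. -/
theorem averaged_translation_cocycle_properties
    {X V : Type*}
    [NormedAddCommGroup V] [NormedSpace ℝ V] [FiniteDimensional ℝ V]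
    (φ : ℝ → X → X) (hφ0 : φ 0 = id) (hφadd : ∀ t s : ℝ, φ (t + s) = φ t ∘ φ s)
    (κ : X → ℝ → V)
    (hκ : ∀ (x : X) (s t : ℝ), κ x (t + s) = κ (φ s x) t + κ x s)
    (hκcont : ∀ x : X, Continuous (κ x))
    (C : ℝ) (hC : 0 < C)
    (κC : X → ℝ → V)
    (hκC : ∀ (x : X) (t : ℝ), κC x t = (1 / C) • ∫ s in (0:ℝ)..C, κ (φ s x) t) :
    (∀ (x : X) (t : ℝ), κC x t =
        (1 / C) • ((∫ r in t..(t + C), κ x r) - ∫ r in (0:ℝ)..C, κ x r)) ∧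
    (∀ (x : X) (s t : ℝ), κC x (t + s) = κC (φ s x) t + κC x s) ∧
    (∀ (x : X) (t : ℝ),
        HasDerivAt (fun τ : ℝ => κC x τ) ((1 / C) • (κ x (t + C) - κ x t)) t) ∧
    (∀ (x : X) (p : ℝ), φ p x = x → κC x p = κ x p) := by
  -- pointwise formula for κ of the flow
  have hpt : ∀ (x : X) (s t : ℝ), κ (φ s x) t = κ x (t + s) - κ x s := by
    intro x s t
    rw [hκ x s t]; abel
  have hcontφ : ∀ (x : X) (t : ℝ), Continuous fun s => κ (φ s x) t := by
    intro x t
    have : (fun s => κ (φ s x) t) = fun s => κ x (t + s) - κ x s := by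
      funext s; exact hpt x s t
    rw [this]
    exact ((hκcont x).comp (continuous_const.add continuous_id)).sub (hκcont x)
  -- (i)
  have hi : ∀ (x : X) (t : ℝ), κC x t =
      (1 / C) • ((∫ r in t..(t + C), κ x r) - ∫ r in (0:ℝ)..C, κ x r) := by
    intro x t
    rw [hκC x t]
    congr 1
    have h1 : (∫ s in (0:ℝ)..C, κ (φ s x) t)
        = ∫ s in (0:ℝ)..C, (κ x (t + s) - κ x s) := by
      apply intervalIntegral.integral_congr
      intro s _
      exact hpt x s t
    have hA : IntervalIntegrable (fun s => κ x (t + s)) volume 0 C := by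
      apply Continuous.intervalIntegrable; fun_prop
    rw [h1, intervalIntegral.integral_sub hA ((hκcont x).intervalIntegrable 0 C)]
    congr 1
    have h2 : (fun s => κ x (t + s)) = fun s => κ x (s + t) := by
      funext s; rw [add_comm]
    rw [h2, intervalIntegral.integral_comp_add_right (κ x) t, zero_add, add_comm C t]
  refine ⟨hi, ?_, ?_, ?_⟩
  · -- (ii)
    intro x s t
    rw [hκC x (t + s), hκC (φ s x) t, hκC x s, ← smul_add]
    congr 1
    rw [← intervalIntegral.integral_add (hcontφ (φ s x) t |>.intervalIntegrable 0 C)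
      (hcontφ x s |>.intervalIntegrable 0 C)]
    apply intervalIntegral.integral_congr
    intro u _
    dsimp only
    have h1 : φ u (φ s x) = φ s (φ u x) := by
      rw [← Function.comp_apply (f := φ u), ← hφadd, add_comm,
        hφadd, Function.comp_apply]
    rw [hκ (φ u x) s t, h1]
  · -- (iii)
    intro x t
    have heq : (fun τ : ℝ => κC x τ) = fun τ =>
        (1 / C) • ((∫ r in τ..(τ + C), κ x r) - ∫ r in (0:ℝ)..C, κ x r) := by
      funext τ; exact hi x τ
    rw [heq]
    have hsplit : ∀ τ : ℝ, (∫ r in τ..(τ + C), κ x r)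
        = (∫ r in (0:ℝ)..(τ + C), κ x r) - ∫ r in (0:ℝ)..τ, κ x r := by
      intro τ
      rw [eq_sub_iff_add_eq, add_comm,
        intervalIntegral.integral_add_adjacent_intervals
          ((hκcont x).intervalIntegrable 0 τ) ((hκcont x).intervalIntegrable τ (τ + C))]
    have hF1 : HasDerivAt (fun τ : ℝ => ∫ r in (0:ℝ)..(τ + C), κ x r) (κ x (t + C)) t := by
      have hout : HasDerivAt (fun u : ℝ => ∫ r in (0:ℝ)..u, κ x r) (κ x (t + C)) (t + C) :=
        ((hκcont x).integral_hasStrictDerivAt 0 (t + C)).hasDerivAt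
      have hin : HasDerivAt (fun τ : ℝ => τ + C) 1 t :=
        (hasDerivAt_id t).add_const C
      simpa [Function.comp_def] using hout.scomp t hin
    have hF2 : HasDerivAt (fun τ : ℝ => ∫ r in (0:ℝ)..τ, κ x r) (κ x t) t :=
      ((hκcont x).integral_hasStrictDerivAt 0 t).hasDerivAt
    have : HasDerivAt (fun τ : ℝ => (∫ r in τ..(τ + C), κ x r) - ∫ r in (0:ℝ)..C, κ x r)
        (κ x (t + C) - κ x t) t := by
      have := (hF1.sub hF2).sub_const (∫ r in (0:ℝ)..C, κ x r)
      apply this.congr_of_eventuallyEq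
      filter_upwards with τ
      rw [hsplit τ]; rfl
    exact this.const_smul (1 / C)
  · -- (iv)
    intro x p hp
    rw [hi x p]
    have h1 : (∫ r in p..(p + C), κ x r) = ∫ r in (0:ℝ)..C, κ x (r + p) := by
      rw [intervalIntegral.integral_comp_add_right (κ x) p, zero_add, add_comm C p]
    have h2 : (∫ r in (0:ℝ)..C, κ x (r + p)) = (∫ r in (0:ℝ)..C, κ x r) + C • κ x p := by
      have : (fun r => κ x (r + p)) = fun r => κ x r + κ x p := by
        funext r
        rw [hκ x p r, hp]
      rw [this, intervalIntegral.integral_add ((hκcont x).intervalIntegrable 0 C)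
        (intervalIntegrable_const), intervalIntegral.integral_const, sub_zero]
    rw [h1, h2, add_sub_cancel_left, smul_smul, one_div, inv_mul_cancel₀ hC.ne', one_smul]
end

section
/- Let E be a finite-dimensional real inner product space and C ⊆ E a closed convex cone containing no line, i.e. C ∩ (−C) ⊆ {0}. Then the dual cone C* = {z ∈ E : ⟪z, x⟫ ≥ 0 for all x ∈ C} has nonempty topological interior. -/
open scoped RealInnerProductSpace


open Module in
/-- In a finite-dimensional real normed space, the convex hull of a compact set
is compact. (Proved via Carathéodory's theorem.) -/
lemma aux_isCompact_convexHull {E : Type*} [NormedAddCommGroup E]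
    [NormedSpace ℝ E] [FiniteDimensional ℝ E] {K : Set E} (hK : IsCompact K)
    (hne : K.Nonempty) : IsCompact (convexHull ℝ K) := by
  classical
  obtain ⟨x₀, hx₀⟩ := hne
  set n : ℕ := finrank ℝ E + 1 with hn
  set S : Set ((Fin n → ℝ) × (Fin n → E)) :=
    stdSimplex ℝ (Fin n) ×ˢ Set.univ.pi (fun _ : Fin n => K) with hS
  have hScomp : IsCompact S :=
    (isCompact_stdSimplex (𝕜 := ℝ) (ι := Fin n)).prod (isCompact_univ_pi fun _ => hK)
  set g : (Fin n → ℝ) × (Fin n → E) → E := fun p => ∑ i, p.1 i • p.2 i with hg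
  have hgcont : Continuous g := by
    apply continuous_finset_sum
    intro i _
    exact ((continuous_apply i).comp continuous_fst).smul
      ((continuous_apply i).comp continuous_snd)
  have himg : convexHull ℝ K = g '' S := by
    apply Set.Subset.antisymm
    · intro x hx
      obtain ⟨ι, hft, z, w, hzK, hai, hwpos, hw1, hsum⟩ :=
        eq_pos_convex_span_of_mem_convexHull hx
      have hcard : Fintype.card ι ≤ n := by
        calc Fintype.card ι ≤ finrank ℝ (vectorSpan ℝ (Set.range z)) + 1 :=
              hai.card_le_finrank_succ
          _ ≤ finrank ℝ E + 1 := by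
              have := Submodule.finrank_le (vectorSpan ℝ (Set.range z))
              omega
          _ = n := hn.symm
      obtain ⟨e⟩ : Nonempty (ι ↪ Fin n) :=
        Function.Embedding.nonempty_of_card_le (by simpa using hcard)
      set w' : Fin n → ℝ := fun j => if h : ∃ i, e i = j then w h.choose else 0
        with hw'
      set p' : Fin n → E := fun j => if h : ∃ i, e i = j then z h.choose else x₀
        with hp'
      have hwe : ∀ i : ι, w' (e i) = w i := by
        intro i
        have h : ∃ i', e i' = e i := ⟨i, rfl⟩
        have : h.choose = i := e.injective h.choose_spec
        simp [hw', dif_pos h, this]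
      have hpe : ∀ i : ι, p' (e i) = z i := by
        intro i
        have h : ∃ i', e i' = e i := ⟨i, rfl⟩
        have : h.choose = i := e.injective h.choose_spec
        simp [hp', dif_pos h, this]
      have hnotin : ∀ j : Fin n, j ∉ Finset.univ.map e → w' j = 0 := by
        intro j hj
        have : ¬ ∃ i, e i = j := by
          simpa [Finset.mem_map] using hj
        simp [hw', dif_neg this]
      have hmapR : ∑ j, w' j = ∑ i, w' (e i) := by
        rw [← Finset.sum_map Finset.univ e w']
        exact (Finset.sum_subset (Finset.subset_univ _)
          (fun j _ hj => hnotin j hj)).symm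
      have hmapE : ∑ j, w' j • p' j = ∑ i, w' (e i) • p' (e i) := by
        rw [← Finset.sum_map Finset.univ e (fun j => w' j • p' j)]
        exact (Finset.sum_subset (Finset.subset_univ _)
          (fun j _ hj => by rw [hnotin j hj, zero_smul])).symm
      refine ⟨(w', p'), ⟨?_, ?_⟩, ?_⟩
      · constructor
        · intro j
          by_cases h : ∃ i, e i = j
          · simp only [hw', dif_pos h]; exact (hwpos _).le
          · simp [hw', dif_neg h]
        · rw [hmapR]
          simp only [hwe]
          exact hw1
      · intro j _
        by_cases h : ∃ i, e i = j
        · simp only [hp', dif_pos h]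
          exact hzK ⟨h.choose, rfl⟩
        · simp only [hp', dif_neg h]
          exact hx₀
      · show ∑ j, w' j • p' j = x
        rw [hmapE]
        simp only [hwe, hpe]
        exact hsum
    · rintro _ ⟨⟨w, p⟩, ⟨⟨hw0, hw1⟩, hp⟩, rfl⟩
      exact (convex_convexHull ℝ K).sum_mem (fun i _ => hw0 i) hw1
        (fun i _ => subset_convexHull ℝ K (hp i (Set.mem_univ i)))
  rw [himg]
  exact hScomp.image hgcont

/-- If `C` is a closed convex cone containing no line (`C ∩ (−C) ⊆ {0}`) in a
finite-dimensional real inner product space, then the dual cone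
`{z : ⟪z, x⟫ ≥ 0 for all x ∈ C}` has nonempty topological interior. -/
theorem dualCone_interior_nonempty_of_salient
    {E : Type*} [NormedAddCommGroup E] [InnerProductSpace ℝ E]
    [FiniteDimensional ℝ E]
    (C : Set E) (hCclosed : IsClosed C) (hCconv : Convex ℝ C)
    (hCcone : ∀ x ∈ C, ∀ t : ℝ, 0 < t → t • x ∈ C)
    (hsalient : C ∩ (-C) ⊆ {0}) :
    (interior {z : E | ∀ x ∈ C, 0 ≤ ⟪z, x⟫}).Nonempty := by
  by_cases hC0 : C ⊆ {0}
  · have : {z : E | ∀ x ∈ C, 0 ≤ ⟪z, x⟫} = Set.univ := by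
      ext z
      simp only [Set.mem_setOf_eq, Set.mem_univ, iff_true]
      intro x hx
      have hx0 : x = 0 := hC0 hx
      simp [hx0]
    rw [this, interior_univ]
    exact ⟨0, trivial⟩
  · rw [Set.not_subset] at hC0
    obtain ⟨x₀, hx₀C, hx₀'⟩ := hC0
    have hx₀ : x₀ ≠ 0 := by simpa using hx₀'
    -- 0 ∈ C
    have h0C : (0 : E) ∈ C := by
      have htend : Filter.Tendsto (fun n : ℕ => (1 / (n + 1) : ℝ) • x₀)
          Filter.atTop (nhds 0) := by
        have := tendsto_one_div_add_atTop_nhds_zero_nat (𝕜 := ℝ)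
        simpa using this.smul_const x₀
      exact hCclosed.mem_of_tendsto htend (Filter.Eventually.of_forall fun n =>
        hCcone x₀ hx₀C _ (by positivity))
    -- C closed under addition
    have hadd : ∀ x ∈ C, ∀ y ∈ C, x + y ∈ C := by
      intro x hx y hy
      have hmid : (1/2 : ℝ) • x + (1/2 : ℝ) • y ∈ C :=
        hCconv hx hy (by norm_num) (by norm_num) (by norm_num)
      have := hCcone _ hmid 2 (by norm_num)
      have h2 : (2 : ℝ) • ((1/2 : ℝ) • x + (1/2 : ℝ) • y) = x + y := by
        rw [smul_add, smul_smul, smul_smul]; norm_num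
      rwa [h2] at this
    -- K = C ∩ unit sphere
    set K : Set E := C ∩ Metric.sphere 0 1 with hK
    have hKcomp : IsCompact K := (isCompact_sphere (0 : E) 1).inter_left hCclosed
    have hBconv : Convex ℝ (convexHull ℝ K) := convex_convexHull ℝ K
    have hKne : K.Nonempty := ⟨‖x₀‖⁻¹ • x₀, hCcone x₀ hx₀C _ (inv_pos.2 (norm_pos_iff.2 hx₀)),
      by simp [norm_smul, abs_of_pos (inv_pos.2 (norm_pos_iff.2 hx₀)),
        inv_mul_cancel₀ (norm_pos_iff.2 hx₀).ne']⟩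
    have hBcomp : IsCompact (convexHull ℝ K) := aux_isCompact_convexHull hKcomp hKne
    -- 0 ∉ conv K
    have h0notin : (0 : E) ∉ convexHull ℝ K := by
      intro h0
      classical
      rw [convexHull_eq] at h0
      obtain ⟨ι, t, w, z, hw, hw1, hz, hc⟩ := h0
      rw [Finset.centerMass_eq_of_sum_1 _ _ hw1] at hc
      have hex : ∃ i ∈ t, w i ≠ 0 := by
        by_contra hn
        push_neg at hn
        have : ∑ i ∈ t, w i = 0 := Finset.sum_eq_zero hn
        rw [hw1] at this; norm_num at this
      obtain ⟨i, hit, hwi⟩ := hex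
      have hwi' : 0 < w i := lt_of_le_of_ne (hw i hit) (Ne.symm hwi)
      have hmemC : ∀ j ∈ t, w j • z j ∈ C := by
        intro j hjt
        rcases eq_or_lt_of_le (hw j hjt) with h | h
        · rw [← h, zero_smul]; exact h0C
        · exact hCcone _ (hz j hjt).1 _ h
      have hsum : w i • z i + ∑ j ∈ t.erase i, w j • z j = 0 := by
        have := Finset.add_sum_erase t (fun j => w j • z j) hit
        rw [hc] at this
        exact this
      have hrest : ∑ j ∈ t.erase i, w j • z j ∈ C :=
        Finset.sum_induction _ (· ∈ C) (fun a b ha hb => hadd a ha b hb) h0C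
          (fun j hj => hmemC j (Finset.mem_of_mem_erase hj))
      have hneg : w i • z i ∈ -C := by
        rw [Set.mem_neg]
        have : -(w i • z i) = ∑ j ∈ t.erase i, w j • z j :=
          neg_eq_of_add_eq_zero_right hsum
        rw [this]; exact hrest
      have : w i • z i = 0 := hsalient ⟨hmemC i hit, hneg⟩
      have hzi0 : z i = 0 := by
        rcases smul_eq_zero.1 this with h | h
        · exact absurd h hwi
        · exact h
      have := (hz i hit).2
      rw [hzi0] at this
      simp at this
    -- separation
    obtain ⟨f, u, hfu, hall⟩ :=
      geometric_hahn_banach_point_closed hBconv hBcomp.isClosed h0notin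
    have hu : 0 < u := by simpa using hfu
    set zz : E := (InnerProductSpace.toDual ℝ E).symm f with hzz
    have hzzf : ∀ y : E, ⟪zz, y⟫ = f y := fun y =>
      InnerProductSpace.toDual_symm_apply
    refine ⟨zz, ?_⟩
    rw [mem_interior]
    refine ⟨Metric.ball zz u, ?_, Metric.isOpen_ball, Metric.mem_ball_self hu⟩
    intro w hw x hx
    rcases eq_or_ne x 0 with rfl | hx0
    · simp
    · have hxpos : (0 : ℝ) < ‖x‖ := norm_pos_iff.2 hx0
      set v : E := ‖x‖⁻¹ • x with hv
      have hvK : v ∈ K := by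
        constructor
        · exact hCcone x hx _ (by positivity)
        · simp [hv, norm_smul, abs_of_pos (inv_pos.2 hxpos),
            inv_mul_cancel₀ hxpos.ne']
      have hzv : u < ⟪zz, v⟫ := by
        rw [hzzf]; exact hall v (subset_convexHull ℝ K hvK)
      have hwz : ‖w - zz‖ < u := by
        rw [Metric.mem_ball, dist_eq_norm] at hw; exact hw
      have hbound : |⟪w - zz, v⟫| ≤ ‖w - zz‖ := by
        have := abs_real_inner_le_norm (w - zz) v
        have hv1 : ‖v‖ = 1 := mem_sphere_zero_iff_norm.1 hvK.2
        rwa [hv1, mul_one] at this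
      have hwv : 0 ≤ ⟪w, v⟫ := by
        have h1 : ⟪w, v⟫ = ⟪zz, v⟫ + ⟪w - zz, v⟫ := by
          rw [← inner_add_left, add_sub_cancel]
        have h2 : -‖w - zz‖ ≤ ⟪w - zz, v⟫ := neg_le_of_abs_le hbound
        nlinarith
      have : ⟪w, x⟫ = ‖x‖ * ⟪w, v⟫ := by
        rw [hv, real_inner_smul_right]
        field_simp
      rw [this]
      positivity
end

section
/- For every θ₀ ∈ (0, π/2) there exists κ > 0 such that for all real numbers a ≥ 0, T > 0 and t > 0 satisfying a ≤ t·(tan θ₀)² and t² + a·t ≤ T², one has R(T, a) ≤ T − κ·a/2, where R(T, a) = (√(a² + 4T²) − a)/2. (One may take κ = cos θ₀.) -/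
/-- For every `θ₀ ∈ (0, π/2)` there exists `κ > 0` such that for all `a ≥ 0`,
`T > 0`, `t > 0` with `a ≤ t·(tan θ₀)²` and `t² + a·t ≤ T²`, one has
`R(T,a) ≤ T − κ·a/2`, where `R(T,a) = (√(a² + 4T²) − a)/2`. -/
theorem R_le_T_sub_kappa
    (θ₀ : ℝ) (hθ₀ : θ₀ ∈ Set.Ioo 0 (Real.pi / 2)) :
    ∃ κ : ℝ, 0 < κ ∧ ∀ a T t : ℝ, 0 ≤ a → 0 < T → 0 < t →
      a ≤ t * Real.tan θ₀ ^ 2 → t ^ 2 + a * t ≤ T ^ 2 →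
      (Real.sqrt (a ^ 2 + 4 * T ^ 2) - a) / 2 ≤ T - κ * a / 2 := by
  obtain ⟨hθ1, hθ2⟩ := hθ₀
  set c := Real.cos θ₀ with hc_def
  set s := Real.sin θ₀ with hs_def
  have hc : 0 < c := Real.cos_pos_of_mem_Ioo ⟨by linarith [Real.pi_pos], hθ2⟩
  have hs : 0 < s := Real.sin_pos_of_pos_of_lt_pi hθ1 (by linarith [Real.pi_pos])
  have hsc : s ^ 2 + c ^ 2 = 1 := Real.sin_sq_add_cos_sq θ₀
  have hc1 : c < 1 := by nlinarith
  have htan : Real.tan θ₀ = s / c := Real.tan_eq_sin_div_cos θ₀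
  refine ⟨c, hc, fun a T t ha hT ht h1 h2 => ?_⟩
  -- from h1 : a ≤ t * (s/c)^2, get a * c^2 ≤ t * s^2
  have hA : a * c ^ 2 ≤ t * s ^ 2 := by
    rw [htan, div_pow] at h1
    have := mul_le_mul_of_nonneg_right h1 (le_of_lt (pow_pos hc 2))
    calc a * c ^ 2 ≤ t * (s ^ 2 / c ^ 2) * c ^ 2 := this
      _ = t * s ^ 2 := by field_simp
  -- key: a * c ≤ T * s^2
  have hkey2 : (a * c) ^ 2 ≤ (T * s ^ 2) ^ 2 := by
    have H1 : (a * c ^ 2) ^ 2 ≤ (t * s ^ 2) ^ 2 :=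
      pow_le_pow_left₀ (mul_nonneg ha (sq_nonneg c)) hA 2
    have H2 : a * (a * c ^ 2) * s ^ 2 ≤ a * (t * s ^ 2) * s ^ 2 :=
      mul_le_mul_of_nonneg_right (mul_le_mul_of_nonneg_left hA ha) (sq_nonneg s)
    have H3 : (t ^ 2 + a * t) * (s ^ 2) ^ 2 ≤ T ^ 2 * (s ^ 2) ^ 2 :=
      mul_le_mul_of_nonneg_right h2 (sq_nonneg _)
    nlinarith [H1, H2, H3, hsc]
  have hkey : a * c ≤ T * s ^ 2 := by
    have h1' : 0 ≤ a * c := mul_nonneg ha hc.le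
    have h2' : 0 ≤ T * s ^ 2 := mul_nonneg hT.le (sq_nonneg s)
    nlinarith
  -- the squared inequality
  have hKI : a ^ 2 + 4 * T ^ 2 ≤ (2 * T + (1 - c) * a) ^ 2 := by
    have hfac : a * c * (a * (2 - c)) ≤ T * s ^ 2 * (a * (2 - c)) :=
      mul_le_mul_of_nonneg_right hkey (by nlinarith)
    rw [show s ^ 2 = 1 - c ^ 2 by linarith] at hfac
    have haT : 0 ≤ a * T * (1 - c) := by
      apply mul_nonneg (mul_nonneg ha hT.le); linarith
    have hq : (0:ℝ) ≤ 2 - c + c ^ 2 := by nlinarith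
    nlinarith [hfac, mul_nonneg haT hq]
  have hsq : Real.sqrt (a ^ 2 + 4 * T ^ 2) ≤ 2 * T + (1 - c) * a := by
    have hnn : 0 ≤ 2 * T + (1 - c) * a := by nlinarith
    calc Real.sqrt (a ^ 2 + 4 * T ^ 2) ≤ Real.sqrt ((2 * T + (1 - c) * a) ^ 2) :=
          Real.sqrt_le_sqrt hKI
      _ = 2 * T + (1 - c) * a := Real.sqrt_sq hnn
  linarith
end

section
/- Let Y be a topological space, ψ a continuous flow on Y, V a finite-dimensional real normed vector space, Σ a type, σ : Σ → Σ, π : Σ → Y, and r : Σ → ℝ, satisfying ψ_{t − r(x)}(π(σ(x))) = ψ_t(π(x)) for every x ∈ Σ and t ∈ ℝ. Let f : Y → V be continuous, φ : V → ℝ linear with φ(f(y)) = 0 for all y ∈ Y, and u ∈ V with φ(u) = 1. Define K(x) = r(x)·u + ∫₀^{r(x)} f(ψ_s(π(x))) ds and the map π̲ : Σ × V → Y × V by π̲(x, v) = (ψ_{φ(v)}(π(x)), v − φ(v)·u − ∫₀^{φ(v)} f(ψ_s(π(x))) ds). Then π̲ is invariant under the map (x, v) ↦ (σ(x), v − K(x)):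 for all (x, v) ∈ Σ × V one has π̲(σ(x), v − K(x)) = π̲(x, v). -/
open MeasureTheory intervalIntegral

/-- Abstract Markov-coding invariance: given a continuous flow `ψ` on `Y`, data
`(σ, π, r)` with `ψ_{t − r(x)}(π(σ x)) = ψ_t(π x)`, a continuous `f : Y → V`
with `φ ∘ f = 0` for a linear form `φ`, and `u` with `φ(u) = 1`, the map
`π̲(x, v) = (ψ_{φ(v)}(π x), v − φ(v)·u − ∫₀^{φ(v)} f(ψ_s(π x)) ds)` is invariant
under `(x, v) ↦ (σ x, v − K(x))`, where
`K(x) = r(x)·u + ∫₀^{r(x)} f(ψ_s(π x)) ds`. -/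
theorem markov_coding_projection_invariant
    {Y V S : Type*} [TopologicalSpace Y]
    [NormedAddCommGroup V] [NormedSpace ℝ V] [FiniteDimensional ℝ V]
    (ψ : ℝ → Y → Y) (hψcont : Continuous fun p : ℝ × Y => ψ p.1 p.2)
    (hψ0 : ψ 0 = id) (hψadd : ∀ t s : ℝ, ψ (t + s) = ψ t ∘ ψ s)
    (σ : S → S) (π : S → Y) (r : S → ℝ)
    (hMarkov : ∀ (x : S) (t : ℝ), ψ (t - r x) (π (σ x)) = ψ t (π x))
    (f : Y → V) (hf : Continuous f)
    (φ : V →ₗ[ℝ] ℝ) (hφf : ∀ y : Y, φ (f y) = 0)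
    (u : V) (hu : φ u = 1)
    (K : S → V)
    (hK : ∀ x : S, K x = r x • u + ∫ s in (0:ℝ)..(r x), f (ψ s (π x)))
    (πbar : S × V → Y × V)
    (hπbar : ∀ (x : S) (v : V), πbar (x, v) =
      (ψ (φ v) (π x),
        v - φ v • u - ∫ s in (0:ℝ)..(φ v), f (ψ s (π x)))) :
    ∀ (x : S) (v : V), πbar (σ x, v - K x) = πbar (x, v) := by
  intro x v
  -- continuity of the integrand along the orbit of any point
  have hcont : ∀ y : Y, Continuous fun s : ℝ => f (ψ s y) := fun y =>
    hf.comp (hψcont.comp (continuous_id.prodMk continuous_const))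
  have hint : ∀ (y : Y) (a b : ℝ),
      IntervalIntegrable (fun s => f (ψ s y)) volume a b := fun y a b =>
    ((hcont y).intervalIntegrable a b)
  -- φ as a continuous linear map
  let φ' : V →L[ℝ] ℝ := LinearMap.toContinuousLinearMap φ
  have hφ' : ∀ w : V, φ' w = φ w := fun w => rfl
  -- φ (K x) = r x
  have hφK : φ (K x) = r x := by
    rw [hK]
    have : φ' (∫ s in (0:ℝ)..(r x), f (ψ s (π x))) =
        ∫ s in (0:ℝ)..(r x), φ' (f (ψ s (π x))) :=
      (φ'.intervalIntegral_comp_comm (hint _ _ _)).symm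
    simp only [map_add, _root_.map_smul, hφ' ] at *
    rw [this]
    simp [hφf, hu]
  have hφvK : φ (v - K x) = φ v - r x := by rw [map_sub, hφK]
  -- relation along the orbit
  have horb : ∀ s : ℝ, ψ s (π (σ x)) = ψ (s + r x) (π x) := fun s => by
    have := hMarkov x (s + r x); simpa using this
  rw [hπbar, hπbar, hφvK]
  have hfirst : ψ (φ v - r x) (π (σ x)) = ψ (φ v) (π x) := hMarkov x (φ v)
  refine Prod.ext hfirst ?_
  -- second component
  have hsub : (∫ s in (0:ℝ)..(φ v - r x), f (ψ s (π (σ x)))) =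
      ∫ s in (r x)..(φ v), f (ψ s (π x)) := by
    have : (∫ s in (0:ℝ)..(φ v - r x), f (ψ (s + r x) (π x))) =
        ∫ s in (0 + r x)..(φ v - r x + r x), f (ψ s (π x)) :=
      intervalIntegral.integral_comp_add_right (fun s => f (ψ s (π x))) (r x)
    simp only [horb]
    simpa using this
  have hsplit : (∫ s in (0:ℝ)..(r x), f (ψ s (π x))) +
      (∫ s in (r x)..(φ v), f (ψ s (π x))) =
      ∫ s in (0:ℝ)..(φ v), f (ψ s (π x)) :=
    intervalIntegral.integral_add_adjacent_intervals (hint _ _ _) (hint _ _ _)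
  rw [hK] at *
  simp only [hsub]
  rw [← hsplit]
  have : (φ v - r x) • u = φ v • u - r x • u := sub_smul _ _ _
  rw [this]
  abel
end
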